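/- Let F be a subfield of ℂ and let a, b ∈ F. Then every complex root x of the sixth-degree equation 2x⁶ − 3a x⁴ − 2b x³ + 3a² x² + b² − a³ = 0 (equivalently, of (a − x²)³ = (b − x³)²) is solvable by radicals over F, i.e. x lies in the subfield solvableByRad F ℂ of elements of ℂ obtainable from F by field operations and extraction of n-th roots. -/

import Mathlib

private lemma radS (F : Subfield ℂ) {x : ℂ} (n : ℕ) (hn : n ≠ 0)
    (h : x ^ n ∈ solvableByRad F ℂ) : x ∈ solvableByRad F ℂ :=
  solvableByRad.rad_mem hn h

private lemma cubic_mem_uv (F : Subfield ℂ) (a b s u v : ℂ)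
    (huS : u ∈ solvableByRad F ℂ) (hvS : v ∈ solvableByRad F ℂ)
    (huv : u * v = a) (hsum : u ^ 3 + v ^ 3 = 2 * b)
    (hs : s ^ 3 - 3 * a * s + 2 * b = 0) : s ∈ solvableByRad F ℂ := by
  have hfac : (s + u + v) * (s ^ 2 + u ^ 2 + v ^ 2 - s * u - s * v - u * v) = 0 := by
    linear_combination hs + hsum + (-3 * s) * huv
  rcases mul_eq_zero.mp hfac with h | h
  · have : s = -u - v := by linear_combination h
    rw [this]
    exact sub_mem (neg_mem huS) hvS
  · have he2 : (2 * s - u - v) ^ 2 = -3 * u ^ 2 + 6 * u * v - 3 * v ^ 2 := by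
      linear_combination 4 * h
    have heS : (2 * s - u - v) ∈ solvableByRad F ℂ := by
      refine radS F 2 (by norm_num) ?_
      rw [he2]
      refine sub_mem (add_mem ?_ ?_) ?_
      · exact mul_mem (neg_mem (ofNat_mem _ 3)) (pow_mem huS 2)
      · exact mul_mem (mul_mem (ofNat_mem _ 6) huS) hvS
      · exact mul_mem (ofNat_mem _ 3) (pow_mem hvS 2)
    have hx : s = ((2 * s - u - v) + u + v) / 2 := by ring
    rw [hx]
    exact div_mem (add_mem (add_mem heS huS) hvS) (ofNat_mem _ 2)

private lemma cubic_mem (F : Subfield ℂ) (a b s : ℂ)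
    (haS : a ∈ solvableByRad F ℂ) (hbS : b ∈ solvableByRad F ℂ)
    (hs : s ^ 3 - 3 * a * s + 2 * b = 0) : s ∈ solvableByRad F ℂ := by
  obtain ⟨d, hd⟩ := IsAlgClosed.exists_pow_nat_eq (b ^ 2 - a ^ 3) (n := 2) (by norm_num)
  have hdS : d ∈ solvableByRad F ℂ := by
    refine radS F 2 (by norm_num) ?_
    rw [hd]
    exact sub_mem (pow_mem hbS 2) (pow_mem haS 3)
  rcases eq_or_ne (b + d) 0 with h1 | h1
  · rcases eq_or_ne (b - d) 0 with h2 | h2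
    · -- degenerate: a = b = 0
      have hb0 : b = 0 := by linear_combination (h1 + h2) / 2
      have hd0 : d = 0 := by linear_combination (h1 - h2) / 2
      have ha3 : a ^ 3 = 0 := by linear_combination hd + b * hb0 - d * hd0
      have ha0 : a = 0 := by
        exact pow_eq_zero_iff (n := 3) (by norm_num) |>.mp ha3
      have hs3 : s ^ 3 = 0 := by linear_combination hs + 3 * s * ha0 - 2 * hb0
      have : s = 0 := pow_eq_zero_iff (n := 3) (by norm_num) |>.mp hs3
      rw [this]; exact zero_mem _
    · -- use u^3 = b - d
      obtain ⟨u, hu⟩ := IsAlgClosed.exists_pow_nat_eq (b - d) (n := 3) (by norm_num)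
      have hu0 : u ≠ 0 := by
        intro h; rw [h] at hu; exact h2 (by linear_combination -hu)
      have huS : u ∈ solvableByRad F ℂ := by
        refine radS F 3 (by norm_num) ?_
        rw [hu]; exact sub_mem hbS hdS
      refine cubic_mem_uv F a b s u (a / u) huS (div_mem haS huS) (by
        field_simp) ?_ hs
      have hv3 : (a / u) ^ 3 = b + d := by
        rw [div_pow, hu, div_eq_iff h2]
        linear_combination hd
      rw [hu, hv3]; ring
  · -- use u^3 = b + d
    obtain ⟨u, hu⟩ := IsAlgClosed.exists_pow_nat_eq (b + d) (n := 3) (by norm_num)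
    have hu0 : u ≠ 0 := by
      intro h; rw [h] at hu; exact h1 (by linear_combination -hu)
    have huS : u ∈ solvableByRad F ℂ := by
      refine radS F 3 (by norm_num) ?_
      rw [hu]; exact add_mem hbS hdS
    refine cubic_mem_uv F a b s u (a / u) huS (div_mem haS huS) (by
      field_simp) ?_ hs
    have hv3 : (a / u) ^ 3 = b - d := by
      rw [div_pow, hu, div_eq_iff h1]
      linear_combination hd
    rw [hu, hv3]; ring

theorem stmt_17 (F : Subfield ℂ) (a b : ℂ) (ha : a ∈ F) (hb : b ∈ F) (x : ℂ)
    (hx : 2 * x ^ 6 - 3 * a * x ^ 4 - 2 * b * x ^ 3 + 3 * a ^ 2 * x ^ 2 + b ^ 2 - a ^ 3 = 0) :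
    x ∈ solvableByRad F ℂ := by
  have haS : a ∈ solvableByRad F ℂ := by
    exact IntermediateField.algebraMap_mem (solvableByRad F ℂ) (⟨a, ha⟩ : F)
  have hbS : b ∈ solvableByRad F ℂ := by
    exact IntermediateField.algebraMap_mem (solvableByRad F ℂ) (⟨b, hb⟩ : F)
  have h1 : (b - x ^ 3) ^ 2 = (a - x ^ 2) ^ 3 := by linear_combination hx
  rcases eq_or_ne (a - x ^ 2) 0 with hne | hne
  · -- then x^3 = b
    have hx3 : x ^ 3 = b := by
      have : (b - x ^ 3) ^ 2 = 0 := by rw [h1, hne]; ring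
      have h0 : b - x ^ 3 = 0 := pow_eq_zero_iff (n := 2) (by norm_num) |>.mp this
      linear_combination -h0
    exact radS F 3 (by norm_num) (hx3 ▸ hbS)
  · set y : ℂ := (b - x ^ 3) / (a - x ^ 2) with hy
    have hy2 : y ^ 2 = a - x ^ 2 := by
      rw [hy, div_pow, div_eq_iff (pow_ne_zero 2 hne)]
      linear_combination h1
    have hy3 : y ^ 3 = b - x ^ 3 := by
      have : y ^ 3 = y * y ^ 2 := by ring
      rw [this, hy2, hy, div_mul_cancel₀ _ hne]
    have h3 : x ^ 2 + y ^ 2 = a := by linear_combination hy2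
    have h2 : x ^ 3 + y ^ 3 = b := by linear_combination hy3
    have hs : (x + y) ^ 3 - 3 * a * (x + y) + 2 * b = 0 := by
      linear_combination (-2) * h2 + 3 * (x + y) * h3
    have hsS : x + y ∈ solvableByRad F ℂ := cubic_mem F a b (x + y) haS hbS hs
    have he2 : (x - y) ^ 2 = 2 * a - (x + y) ^ 2 := by linear_combination 2 * h3
    have heS : x - y ∈ solvableByRad F ℂ := by
      refine radS F 2 (by norm_num) ?_
      rw [he2]
      exact sub_mem (mul_mem (ofNat_mem _ 2) haS) (pow_mem hsS 2)
    have : x = ((x + y) + (x - y)) / 2 := by ring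
    rw [this]
    exact div_mem (add_mem hsS heS) (ofNat_mem _ 2)
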